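/- Let c > 0 be a real number and T ≥ 2 a natural number. Then ∑_{k=⌊T/2⌋+1}^{T} (1/k)·exp(−c·(√T − √k)) ≤ 4/(c·√T) + 2/T. -/

import Mathlib

/-- Tail-part bound in the proof of the Square-Root Exponentially Weighted Sum Bound. -/
theorem sqrt_exp_weighted_sum_tail_bound (c : ℝ) (hc : 0 < c) (T : ℕ) (hT : 2 ≤ T) :
    ∑ k ∈ Finset.Icc (T / 2 + 1) T, (1 / (k : ℝ)) * Real.exp (-c * (Real.sqrt T - Real.sqrt k))
      ≤ 4 / (c * Real.sqrt T) + 2 / T := by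
  have hT0 : (0:ℝ) < T := by exact_mod_cast Nat.lt_of_lt_of_le (by norm_num) hT
  set s := Real.sqrt T with hsdef
  have hs : 0 < s := Real.sqrt_pos.mpr hT0
  have hss : s * s = T := Real.mul_self_sqrt hT0.le
  set x := c / (2 * s) with hxdef
  have hx : 0 < x := by positivity
  set r := Real.exp (-x) with hrdef
  have hr0 : 0 < r := Real.exp_pos _
  have hr1 : r < 1 := Real.exp_lt_one_iff.mpr (by linarith)
  -- termwise bound
  have key : ∀ k ∈ Finset.Icc (T / 2 + 1) T,
      (1 / (k : ℝ)) * Real.exp (-c * (s - Real.sqrt k)) ≤ (2 / T) * r ^ (T - k) := by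
    intro k hk
    simp only [Finset.mem_Icc] at hk
    obtain ⟨hk1, hk2⟩ := hk
    have hkpos : 0 < k := by omega
    have hk0 : (0:ℝ) < k := by exact_mod_cast hkpos
    have h1 : (1:ℝ) / k ≤ 2 / T := by
      rw [div_le_div_iff₀ hk0 hT0]
      have h2k : T ≤ 2 * k := by omega
      have : (T:ℝ) ≤ 2 * k := by exact_mod_cast h2k
      linarith
    have hsk : Real.sqrt k ≤ s := Real.sqrt_le_sqrt (by exact_mod_cast hk2)
    have hsk0 : 0 ≤ Real.sqrt k := Real.sqrt_nonneg _
    have hkk : Real.sqrt k * Real.sqrt k = k := Real.mul_self_sqrt hk0.le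
    have hTk : ((T - k : ℕ) : ℝ) = (T:ℝ) - k := by
      have := Nat.cast_sub hk2 (R := ℝ); linarith
    have h2 : Real.exp (-c * (s - Real.sqrt k)) ≤ r ^ (T - k) := by
      rw [hrdef, ← Real.exp_nat_mul, Real.exp_le_exp, hTk]
      have h3 : ((T:ℝ) - k) * x ≤ c * (s - Real.sqrt k) := by
        rw [hxdef, ← mul_div_assoc, div_le_iff₀ (by positivity)]
        nlinarith [mul_nonneg hc.le (sq_nonneg (s - Real.sqrt k))]
      nlinarith
    exact mul_le_mul h1 h2 (Real.exp_pos _).le (by positivity)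
  have hstep := Finset.sum_le_sum key
  -- reindex and geometric bound
  have himg : ∑ k ∈ Finset.Icc (T / 2 + 1) T, r ^ (T - k)
      = ∑ j ∈ (Finset.Icc (T / 2 + 1) T).image (fun k => T - k), r ^ j := by
    rw [Finset.sum_image]
    intro a ha b hb hab
    simp only [Finset.mem_coe, Finset.coe_Icc, Set.mem_Icc, Finset.mem_Icc] at ha hb hab
    omega
  have hsub : (Finset.Icc (T / 2 + 1) T).image (fun k => T - k) ⊆ Finset.range (T + 1) := by
    intro j hj
    simp only [Finset.mem_image, Finset.mem_Icc, Finset.mem_range] at hj ⊢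
    omega
  have hmono : ∑ j ∈ (Finset.Icc (T / 2 + 1) T).image (fun k => T - k), r ^ j
      ≤ ∑ j ∈ Finset.range (T + 1), r ^ j :=
    Finset.sum_le_sum_of_subset_of_nonneg hsub (fun i _ _ => by positivity)
  have hgeom : ∑ j ∈ Finset.range (T + 1), r ^ j ≤ 1 / (1 - r) := by
    rw [le_div_iff₀ (by linarith)]
    have := geom_sum_mul r (T + 1)
    nlinarith [pow_nonneg hr0.le (T + 1)]
  have hinv : 1 / (1 - r) ≤ 1 + 1 / x := by
    have hexp : 1 + x ≤ Real.exp x := by linarith [Real.add_one_le_exp x]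
    have hrb : r ≤ 1 / (1 + x) := by
      rw [hrdef, Real.exp_neg, inv_eq_one_div]
      apply one_div_le_one_div_of_le (by linarith) hexp
    rw [div_le_iff₀ (by linarith)]
    have h1x : 0 < 1 + x := by linarith
    have : r * (1 + x) ≤ 1 := by
      calc r * (1 + x) ≤ (1 / (1 + x)) * (1 + x) := by nlinarith
        _ = 1 := by field_simp
    have heq : (1 + 1 / x) * (1 - r) = (1 + x - r * (1 + x)) / x := by
      field_simp; ring
    rw [heq, le_div_iff₀ hx]
    linarith
  have hfinal : (2 / (T:ℝ)) * (1 + 1 / x) = 4 / (c * s) + 2 / T := by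
    rw [hxdef]
    field_simp
    linear_combination 4 * hss
  calc ∑ k ∈ Finset.Icc (T / 2 + 1) T, (1 / (k : ℝ)) * Real.exp (-c * (s - Real.sqrt k))
      ≤ ∑ k ∈ Finset.Icc (T / 2 + 1) T, (2 / (T:ℝ)) * r ^ (T - k) := hstep
    _ = (2 / (T:ℝ)) * ∑ k ∈ Finset.Icc (T / 2 + 1) T, r ^ (T - k) := by
        rw [Finset.mul_sum]
    _ ≤ (2 / (T:ℝ)) * (1 / (1 - r)) := by
        apply mul_le_mul_of_nonneg_left _ (by positivity)
        rw [himg]; exact le_trans hmono hgeom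
    _ ≤ (2 / (T:ℝ)) * (1 + 1 / x) := by
        apply mul_le_mul_of_nonneg_left hinv (by positivity)
    _ = 4 / (c * s) + 2 / T := hfinal
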